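/- (Theorem 2) Fix symmetric H, positive definite matrices P and Σ, orthogonal V, and σ² > 0. Define F(D₁, D₂) = tr((P + σ⁻²VᵀD₁V)⁻¹) + γ·tr((H(P + σ⁻²VᵀD₁V)⁻¹H + Σ)⁻¹ + σ⁻²VᵀD₂V)⁻¹ for γ > 0, where D₁, D₂ range over diagonal matrices with diagonal entries in [0,1]. Then F is jointly convex in (D₁, D₂). -/

import Mathlib

open Matrix

section Helpers

variable {n : ℕ}



lemma psd_smul {A : Matrix (Fin n) (Fin n) ℝ} (hA : A.PosSemidef) {c : ℝ} (hc : 0 ≤ c) :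
    (c • A).PosSemidef := by
  refine posSemidef_iff_dotProduct_mulVec.mpr ⟨?_, fun x => ?_⟩
  · unfold Matrix.IsHermitian
    rw [conjTranspose_smul, hA.1]
    simp
  · simp only [smul_mulVec, dotProduct_smul, smul_eq_mul]
    exact mul_nonneg hc (hA.dotProduct_mulVec_nonneg x)

lemma pd_smul {A : Matrix (Fin n) (Fin n) ℝ} (hA : A.PosDef) {c : ℝ} (hc : 0 < c) :
    (c • A).PosDef := by
  refine posDef_iff_dotProduct_mulVec.mpr ⟨?_, fun x hx => ?_⟩
  · unfold Matrix.IsHermitian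
    rw [conjTranspose_smul, hA.1]
    simp
  · simp only [smul_mulVec, dotProduct_smul, smul_eq_mul]
    exact mul_pos hc (hA.dotProduct_mulVec_pos hx)

lemma psd_trace_nonneg {A : Matrix (Fin n) (Fin n) ℝ} (hA : A.PosSemidef) : 0 ≤ A.trace := by
  rw [Matrix.trace]
  refine Finset.sum_nonneg fun i _ => ?_
  simpa using hA.dotProduct_mulVec_nonneg (Pi.single i 1)

lemma convPD {A B : Matrix (Fin n) (Fin n) ℝ} (hA : A.PosDef) (hB : B.PosDef) {θ : ℝ}
    (h0 : 0 ≤ θ) (h1 : θ ≤ 1) : (θ • A + (1 - θ) • B).PosDef := by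
  rcases eq_or_lt_of_le h1 with h | h
  · subst h; simpa using hA
  · exact Matrix.PosDef.posSemidef_add (psd_smul hA.posSemidef h0) (pd_smul hB (by linarith))




lemma dot_symm {S : Matrix (Fin n) (Fin n) ℝ} (hS : Sᵀ = S) (a b : Fin n → ℝ) :
    a ⬝ᵥ (S *ᵥ b) = b ⬝ᵥ (S *ᵥ a) := by
  rw [Matrix.dotProduct_mulVec]
  nth_rewrite 1 [← hS]
  rw [Matrix.vecMul_transpose, dotProduct_comm]

lemma trace_var {M Z : Matrix (Fin n) (Fin n) ℝ} (hM : M.PosDef) (hZ : Z.IsHermitian) :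
    2 * Z.trace - (Z * M * Z).trace ≤ (M⁻¹).trace := by
  have hdet : IsUnit M.det := (Matrix.isUnit_iff_isUnit_det M).mp hM.isUnit
  have h1 : M * M⁻¹ = 1 := Matrix.mul_nonsing_inv M hdet
  have h2 : M⁻¹ * M = 1 := Matrix.nonsing_inv_mul M hdet
  have hZi : (M⁻¹).IsHermitian := hM.inv.isHermitian
  set E := Z - M⁻¹ with hE
  have hEh : Eᴴ = E := by
    rw [hE, conjTranspose_sub, hZ.eq, hZi.eq]
  have hpsd : (Eᴴ * M * E).PosSemidef := hM.posSemidef.conjTranspose_mul_mul_same E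
  have key : Eᴴ * M * E = Z * M * Z - Z - Z + M⁻¹ := by
    rw [hEh, hE]
    simp only [Matrix.sub_mul, Matrix.mul_sub, Matrix.mul_assoc, h1, Matrix.mul_one]
    rw [← Matrix.mul_assoc M⁻¹ M Z, h2, Matrix.one_mul, ← Matrix.mul_assoc]
    abel
  have htr : 0 ≤ (Z * M * Z - Z - Z + M⁻¹).trace := key ▸ psd_trace_nonneg hpsd
  rw [Matrix.trace_add, Matrix.trace_sub, Matrix.trace_sub] at htr
  linarith

lemma dot_var {W : Matrix (Fin n) (Fin n) ℝ} (hW : W.PosDef) (x y : Fin n → ℝ) :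
    2 * (y ⬝ᵥ x) - y ⬝ᵥ (W *ᵥ y) ≤ x ⬝ᵥ (W⁻¹ *ᵥ x) := by
  have hdet : IsUnit W.det := (Matrix.isUnit_iff_isUnit_det W).mp hW.isUnit
  have h1 : W * W⁻¹ = 1 := Matrix.mul_nonsing_inv W hdet
  have hWt : Wᵀ = W := by
    rw [← conjTranspose_eq_transpose_of_trivial]; exact hW.isHermitian.eq
  have hWx : W *ᵥ (W⁻¹ *ᵥ x) = x := by
    rw [Matrix.mulVec_mulVec, h1, Matrix.one_mulVec]
  set e := y - W⁻¹ *ᵥ x with he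
  have hpos : 0 ≤ e ⬝ᵥ (W *ᵥ e) := by simpa using hW.posSemidef.dotProduct_mulVec_nonneg e
  have hexp : e ⬝ᵥ (W *ᵥ e)
      = y ⬝ᵥ (W *ᵥ y) - y ⬝ᵥ x - y ⬝ᵥ x + x ⬝ᵥ (W⁻¹ *ᵥ x) := by
    rw [he, Matrix.mulVec_sub, hWx, dotProduct_sub, sub_dotProduct, sub_dotProduct]
    have e3 : (W⁻¹ *ᵥ x) ⬝ᵥ (W *ᵥ y) = y ⬝ᵥ x := by
      rw [dot_symm hWt, hWx, dotProduct_comm]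
    have e4 : (W⁻¹ *ᵥ x) ⬝ᵥ x = x ⬝ᵥ (W⁻¹ *ᵥ x) := dotProduct_comm _ _
    rw [e3, e4]
    ring
  rw [hexp] at hpos
  linarith

lemma inv_conv {A B : Matrix (Fin n) (Fin n) ℝ} (hA : A.PosDef) (hB : B.PosDef) {θ : ℝ}
    (h0 : 0 ≤ θ) (h1 : θ ≤ 1) :
    (θ • A⁻¹ + (1 - θ) • B⁻¹ - (θ • A + (1 - θ) • B)⁻¹).PosSemidef := by
  have hM : (θ • A + (1 - θ) • B).PosDef := convPD hA hB h0 h1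
  set M := θ • A + (1 - θ) • B with hMdef
  have hdet : IsUnit M.det := (Matrix.isUnit_iff_isUnit_det M).mp hM.isUnit
  have h1M : M * M⁻¹ = 1 := Matrix.mul_nonsing_inv M hdet
  refine posSemidef_iff_dotProduct_mulVec.mpr ⟨?_, fun x => ?_⟩
  · unfold Matrix.IsHermitian
    simp only [conjTranspose_sub, conjTranspose_add, conjTranspose_smul,
      hA.inv.isHermitian.eq, hB.inv.isHermitian.eq, hM.inv.isHermitian.eq, star_trivial]
  · set y := M⁻¹ *ᵥ x with hy
    have hMy : M *ᵥ y = x := by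
      rw [hy, Matrix.mulVec_mulVec, h1M, Matrix.one_mulVec]
    have hxM : x ⬝ᵥ (M⁻¹ *ᵥ x) = 2 * (y ⬝ᵥ x) - y ⬝ᵥ (M *ᵥ y) := by
      rw [hMy, ← hy, dotProduct_comm x y]
      ring
    have hsplit : y ⬝ᵥ (M *ᵥ y) = θ * (y ⬝ᵥ (A *ᵥ y)) + (1 - θ) * (y ⬝ᵥ (B *ᵥ y)) := by
      rw [hMdef, Matrix.add_mulVec, smul_mulVec, smul_mulVec, dotProduct_add,
        dotProduct_smul, dotProduct_smul, smul_eq_mul, smul_eq_mul]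
    have ha := dot_var hA x y
    have hb := dot_var hB x y
    have ha' := mul_le_mul_of_nonneg_left ha h0
    have hb' := mul_le_mul_of_nonneg_left hb (by linarith : (0:ℝ) ≤ 1 - θ)
    simp only [star_trivial, Matrix.sub_mulVec, Matrix.add_mulVec, smul_mulVec,
      dotProduct_sub, dotProduct_add, dotProduct_smul, smul_eq_mul]
    rw [hxM, hsplit]
    nlinarith [ha', hb']



lemma woodbury {A S H : Matrix (Fin n) (Fin n) ℝ}
    (hA : IsUnit A.det) (hS : IsUnit S.det)
    (hB : IsUnit (H * A⁻¹ * H + S).det) (hW : IsUnit (A + H * S⁻¹ * H).det) :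
    (H * A⁻¹ * H + S)⁻¹
      = S⁻¹ - S⁻¹ * H * (A + H * S⁻¹ * H)⁻¹ * H * S⁻¹ := by
  set B := H * A⁻¹ * H + S with hBdef
  set W := A + H * S⁻¹ * H with hWdef
  have hSS : S⁻¹ * S = 1 := Matrix.nonsing_inv_mul _ hS
  have hAA : A * A⁻¹ = 1 := Matrix.mul_nonsing_inv _ hA
  have hBB : B * B⁻¹ = 1 := Matrix.mul_nonsing_inv _ hB
  have hWW : W⁻¹ * W = 1 := Matrix.nonsing_inv_mul _ hW
  have step1 : W * (A⁻¹ * H) = H * (S⁻¹ * B) := by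
    rw [hWdef, hBdef]
    simp only [Matrix.mul_add, Matrix.add_mul, Matrix.mul_assoc]
    rw [hSS, Matrix.mul_one, ← Matrix.mul_assoc A A⁻¹ H, hAA, Matrix.one_mul]
    abel
  have step2 : A⁻¹ * H * B⁻¹ = W⁻¹ * (H * S⁻¹) := by
    have h := congrArg (fun X => W⁻¹ * X * B⁻¹) step1
    rw [← Matrix.mul_assoc W⁻¹ W (A⁻¹ * H), hWW, Matrix.one_mul] at h
    rw [h]
    rw [Matrix.mul_assoc W⁻¹ (H * (S⁻¹ * B)) B⁻¹, Matrix.mul_assoc H (S⁻¹ * B) B⁻¹,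
      Matrix.mul_assoc S⁻¹ B B⁻¹, hBB, Matrix.mul_one]
  -- B⁻¹ = S⁻¹ - S⁻¹ * (H * A⁻¹ * H) * B⁻¹
  have step3 : B⁻¹ = S⁻¹ - S⁻¹ * (H * A⁻¹ * H) * B⁻¹ := by
    have h : S⁻¹ * B = S⁻¹ * (H * A⁻¹ * H) + 1 := by
      rw [hBdef, mul_add, hSS]
    have h2 : S⁻¹ * B * B⁻¹ = S⁻¹ := by
      rw [Matrix.mul_assoc, hBB, Matrix.mul_one]
    rw [h, add_mul, Matrix.one_mul] at h2
    exact (eq_sub_of_add_eq' h2)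
  rw [step3]
  congr 1
  rw [Matrix.mul_assoc S⁻¹ (H * A⁻¹ * H) B⁻¹]
  rw [show H * A⁻¹ * H * B⁻¹ = H * (A⁻¹ * H * B⁻¹) by simp only [Matrix.mul_assoc]]
  rw [step2]
  simp only [Matrix.mul_assoc]

lemma hahb_psd {A S H : Matrix (Fin n) (Fin n) ℝ} (hA : A.PosDef) (hS : S.PosDef)
    (hH : Hᴴ = H) : (H * A⁻¹ * H + S).PosDef := by
  have h1 : (Hᴴ * A⁻¹ * H).PosSemidef := hA.inv.posSemidef.conjTranspose_mul_mul_same H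
  rw [hH] at h1
  exact Matrix.PosDef.posSemidef_add h1 hS

lemma G_concave {A₁ A₂ S H : Matrix (Fin n) (Fin n) ℝ}
    (hA₁ : A₁.PosDef) (hA₂ : A₂.PosDef) (hS : S.PosDef) (hH : Hᴴ = H) {θ : ℝ}
    (h0 : 0 ≤ θ) (h1 : θ ≤ 1) :
    ((H * (θ • A₁ + (1 - θ) • A₂)⁻¹ * H + S)⁻¹ -
      (θ • (H * A₁⁻¹ * H + S)⁻¹ + (1 - θ) • (H * A₂⁻¹ * H + S)⁻¹)).PosSemidef := by
  have hAθ : (θ • A₁ + (1 - θ) • A₂).PosDef := convPD hA₁ hA₂ h0 h1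
  set Aθ := θ • A₁ + (1 - θ) • A₂ with hAθdef
  have hK : (H * S⁻¹ * H).PosSemidef := by
    have h1 : (Hᴴ * S⁻¹ * H).PosSemidef := hS.inv.posSemidef.conjTranspose_mul_mul_same H
    rwa [hH] at h1
  have hW₁ : (A₁ + H * S⁻¹ * H).PosDef := hA₁.add_posSemidef hK
  have hW₂ : (A₂ + H * S⁻¹ * H).PosDef := hA₂.add_posSemidef hK
  have hWθ : (Aθ + H * S⁻¹ * H).PosDef := hAθ.add_posSemidef hK
  have hWcomb : Aθ + H * S⁻¹ * H = θ • (A₁ + H * S⁻¹ * H) + (1 - θ) • (A₂ + H * S⁻¹ * H) := by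
    rw [hAθdef]; module
  have du : ∀ {M : Matrix (Fin n) (Fin n) ℝ}, M.PosDef → IsUnit M.det :=
    fun hM => (Matrix.isUnit_iff_isUnit_det _).mp hM.isUnit
  have hw₁ := woodbury (du hA₁) (du hS) (du (hahb_psd hA₁ hS hH)) (du hW₁)
  have hw₂ := woodbury (du hA₂) (du hS) (du (hahb_psd hA₂ hS hH)) (du hW₂)
  have hwθ := woodbury (du hAθ) (du hS) (du (hahb_psd hAθ hS hH)) (du hWθ)
  set W₁ := A₁ + H * S⁻¹ * H
  set W₂ := A₂ + H * S⁻¹ * H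
  have hSinv : (S⁻¹)ᴴ = S⁻¹ := hS.inv.isHermitian.eq
  have hKc : (H * S⁻¹)ᴴ = S⁻¹ * H := by
    rw [conjTranspose_mul, hSinv, hH]
  have hSdiff : (θ • W₁⁻¹ + (1 - θ) • W₂⁻¹ - (Aθ + H * S⁻¹ * H)⁻¹).PosSemidef := by
    rw [hWcomb]
    exact inv_conv hW₁ hW₂ h0 h1
  have hid : (H * Aθ⁻¹ * H + S)⁻¹ -
      (θ • (H * A₁⁻¹ * H + S)⁻¹ + (1 - θ) • (H * A₂⁻¹ * H + S)⁻¹)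
      = (H * S⁻¹)ᴴ * (θ • W₁⁻¹ + (1 - θ) • W₂⁻¹ - (Aθ + H * S⁻¹ * H)⁻¹) * (H * S⁻¹) := by
    rw [hw₁, hw₂, hwθ, hKc]
    simp only [Matrix.mul_sub, Matrix.sub_mul, Matrix.mul_add, Matrix.add_mul,
      Matrix.smul_mul, Matrix.mul_smul, smul_sub, smul_add, Matrix.mul_assoc]
    module
  rw [hid]
  exact hSdiff.conjTranspose_mul_mul_same (H * S⁻¹)

lemma trace_ineq {M₁ M₂ Mθ : Matrix (Fin n) (Fin n) ℝ}
    (h₁ : M₁.PosDef) (h₂ : M₂.PosDef) (hθ : Mθ.PosDef) {θ : ℝ} (h0 : 0 ≤ θ) (h1 : θ ≤ 1)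
    (hge : (Mθ - (θ • M₁ + (1 - θ) • M₂)).PosSemidef) :
    (Mθ⁻¹).trace ≤ θ * (M₁⁻¹).trace + (1 - θ) * (M₂⁻¹).trace := by
  set Z := Mθ⁻¹ with hZdef
  have hZ : Z.IsHermitian := hθ.inv.isHermitian
  have hdet : IsUnit Mθ.det := (Matrix.isUnit_iff_isUnit_det _).mp hθ.isUnit
  have hZMZ : Z * Mθ * Z = Z := by
    rw [hZdef, Matrix.nonsing_inv_mul _ hdet, Matrix.one_mul]
  have hcong : 0 ≤ (Z * (Mθ - (θ • M₁ + (1 - θ) • M₂)) * Z).trace := by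
    have h := hge.conjTranspose_mul_mul_same Z
    rw [hZ.eq] at h
    exact psd_trace_nonneg h
  have hexp : (Z * (Mθ - (θ • M₁ + (1 - θ) • M₂)) * Z).trace
      = (Z * Mθ * Z).trace - (θ * (Z * M₁ * Z).trace + (1 - θ) * (Z * M₂ * Z).trace) := by
    simp only [Matrix.mul_sub, Matrix.sub_mul, Matrix.mul_add, Matrix.add_mul,
      Matrix.mul_smul, Matrix.smul_mul, Matrix.trace_sub, Matrix.trace_add,
      Matrix.trace_smul, smul_eq_mul]
  rw [hexp, hZMZ] at hcong
  have v₁ := trace_var h₁ hZ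
  have v₂ := trace_var h₂ hZ
  have v₁' := mul_le_mul_of_nonneg_left v₁ h0
  have v₂' := mul_le_mul_of_nonneg_left v₂ (by linarith : (0:ℝ) ≤ 1 - θ)
  nlinarith [v₁', v₂', hcong]

end Helpers

/-- Theorem 2: the two-step objective
`F(D₁, D₂) = tr((P + σ⁻²VᵀD₁V)⁻¹)
  + γ·tr(((H(P + σ⁻²VᵀD₁V)⁻¹H + Σ)⁻¹ + σ⁻²VᵀD₂V)⁻¹)`
is jointly convex in `(D₁, D₂)` over diagonal matrices with entries in `[0,1]`. -/
theorem objective_jointly_convex {n : ℕ}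
    (H P V Sig : Matrix (Fin n) (Fin n) ℝ) (σ2 γ : ℝ)
    (hH : H.IsSymm) (hP : P.PosDef) (hSig : Sig.PosDef)
    (hV : Vᵀ * V = 1) (hσ : 0 < σ2) (hγ : 0 < γ) :
    ∀ X₁ X₂ Y₁ Y₂ : Matrix (Fin n) (Fin n) ℝ,
      X₁.IsDiag → (∀ i, 0 ≤ X₁ i i ∧ X₁ i i ≤ 1) →
      X₂.IsDiag → (∀ i, 0 ≤ X₂ i i ∧ X₂ i i ≤ 1) →
      Y₁.IsDiag → (∀ i, 0 ≤ Y₁ i i ∧ Y₁ i i ≤ 1) →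
      Y₂.IsDiag → (∀ i, 0 ≤ Y₂ i i ∧ Y₂ i i ≤ 1) →
      ∀ θ : ℝ, 0 ≤ θ → θ ≤ 1 →
      (fun D₁ D₂ : Matrix (Fin n) (Fin n) ℝ =>
          ((P + σ2⁻¹ • (Vᵀ * D₁ * V))⁻¹).trace +
          γ * (((H * (P + σ2⁻¹ • (Vᵀ * D₁ * V))⁻¹ * H + Sig)⁻¹ +
                σ2⁻¹ • (Vᵀ * D₂ * V))⁻¹).trace)
        (θ • X₁ + (1 - θ) • Y₁) (θ • X₂ + (1 - θ) • Y₂) ≤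
      θ * (fun D₁ D₂ : Matrix (Fin n) (Fin n) ℝ =>
          ((P + σ2⁻¹ • (Vᵀ * D₁ * V))⁻¹).trace +
          γ * (((H * (P + σ2⁻¹ • (Vᵀ * D₁ * V))⁻¹ * H + Sig)⁻¹ +
                σ2⁻¹ • (Vᵀ * D₂ * V))⁻¹).trace) X₁ X₂ +
      (1 - θ) * (fun D₁ D₂ : Matrix (Fin n) (Fin n) ℝ =>
          ((P + σ2⁻¹ • (Vᵀ * D₁ * V))⁻¹).trace +
          γ * (((H * (P + σ2⁻¹ • (Vᵀ * D₁ * V))⁻¹ * H + Sig)⁻¹ +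
                σ2⁻¹ • (Vᵀ * D₂ * V))⁻¹).trace) Y₁ Y₂ := by
  intro X₁ X₂ Y₁ Y₂ hdX₁ hbX₁ hdX₂ hbX₂ hdY₁ hbY₁ hdY₂ hbY₂ θ h0 h1
  simp only []
  have hH' : Hᴴ = H := by rw [conjTranspose_eq_transpose_of_trivial]; exact hH
  -- PSD of the data terms
  have psdC : ∀ D : Matrix (Fin n) (Fin n) ℝ, D.IsDiag → (∀ i, 0 ≤ D i i ∧ D i i ≤ 1) →
      (σ2⁻¹ • (Vᵀ * D * V)).PosSemidef := by
    intro D hd hb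
    have hDpsd : D.PosSemidef := by
      have h : (Matrix.diagonal D.diag).PosSemidef :=
        Matrix.posSemidef_diagonal_iff.mpr (fun i => (hb i).1)
      rwa [hd.diagonal_diag] at h
    have hconj : (Vᴴ * D * V).PosSemidef := hDpsd.conjTranspose_mul_mul_same V
    rw [conjTranspose_eq_transpose_of_trivial] at hconj
    exact psd_smul hconj (by positivity)
  have pdA : ∀ D : Matrix (Fin n) (Fin n) ℝ, D.IsDiag → (∀ i, 0 ≤ D i i ∧ D i i ≤ 1) →
      (P + σ2⁻¹ • (Vᵀ * D * V)).PosDef := fun D hd hb => hP.add_posSemidef (psdC D hd hb)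
  have pdAX := pdA X₁ hdX₁ hbX₁
  have pdAY := pdA Y₁ hdY₁ hbY₁
  -- linearity
  have hlin : ∀ X Y : Matrix (Fin n) (Fin n) ℝ,
      Vᵀ * (θ • X + (1 - θ) • Y) * V = θ • (Vᵀ * X * V) + (1 - θ) • (Vᵀ * Y * V) := by
    intro X Y
    simp only [Matrix.mul_add, Matrix.add_mul, mul_smul_comm, smul_mul_assoc]
  have hAlin : P + σ2⁻¹ • (Vᵀ * (θ • X₁ + (1 - θ) • Y₁) * V)
      = θ • (P + σ2⁻¹ • (Vᵀ * X₁ * V)) + (1 - θ) • (P + σ2⁻¹ • (Vᵀ * Y₁ * V)) := by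
    rw [hlin]; module
  have hClin : σ2⁻¹ • (Vᵀ * (θ • X₂ + (1 - θ) • Y₂) * V)
      = θ • (σ2⁻¹ • (Vᵀ * X₂ * V)) + (1 - θ) • (σ2⁻¹ • (Vᵀ * Y₂ * V)) := by
    rw [hlin]; module
  -- Term 1
  have ht1 : (((P + σ2⁻¹ • (Vᵀ * (θ • X₁ + (1 - θ) • Y₁) * V))⁻¹).trace)
      ≤ θ * (((P + σ2⁻¹ • (Vᵀ * X₁ * V))⁻¹).trace)
        + (1 - θ) * (((P + σ2⁻¹ • (Vᵀ * Y₁ * V))⁻¹).trace) := by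
    rw [hAlin]
    refine trace_ineq pdAX pdAY (convPD pdAX pdAY h0 h1) h0 h1 ?_
    rw [sub_self]
    exact Matrix.PosSemidef.zero
  -- Term 2
  have pdMX : ((H * (P + σ2⁻¹ • (Vᵀ * X₁ * V))⁻¹ * H + Sig)⁻¹
      + σ2⁻¹ • (Vᵀ * X₂ * V)).PosDef :=
    (hahb_psd pdAX hSig hH').inv.add_posSemidef (psdC X₂ hdX₂ hbX₂)
  have pdMY : ((H * (P + σ2⁻¹ • (Vᵀ * Y₁ * V))⁻¹ * H + Sig)⁻¹
      + σ2⁻¹ • (Vᵀ * Y₂ * V)).PosDef :=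
    (hahb_psd pdAY hSig hH').inv.add_posSemidef (psdC Y₂ hdY₂ hbY₂)
  have pdADθ : (P + σ2⁻¹ • (Vᵀ * (θ • X₁ + (1 - θ) • Y₁) * V)).PosDef := by
    rw [hAlin]; exact convPD pdAX pdAY h0 h1
  have psdCθ : (σ2⁻¹ • (Vᵀ * (θ • X₂ + (1 - θ) • Y₂) * V)).PosSemidef := by
    rw [hClin]
    exact (psd_smul (psdC X₂ hdX₂ hbX₂) h0).add
      (psd_smul (psdC Y₂ hdY₂ hbY₂) (by linarith : (0:ℝ) ≤ 1 - θ))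
  have pdMθ : ((H * (P + σ2⁻¹ • (Vᵀ * (θ • X₁ + (1 - θ) • Y₁) * V))⁻¹ * H + Sig)⁻¹
      + σ2⁻¹ • (Vᵀ * (θ • X₂ + (1 - θ) • Y₂) * V)).PosDef :=
    (hahb_psd pdADθ hSig hH').inv.add_posSemidef psdCθ
  have hG := G_concave pdAX pdAY hSig hH' h0 h1
  have hge : (((H * (P + σ2⁻¹ • (Vᵀ * (θ • X₁ + (1 - θ) • Y₁) * V))⁻¹ * H + Sig)⁻¹
        + σ2⁻¹ • (Vᵀ * (θ • X₂ + (1 - θ) • Y₂) * V))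
      - (θ • ((H * (P + σ2⁻¹ • (Vᵀ * X₁ * V))⁻¹ * H + Sig)⁻¹ + σ2⁻¹ • (Vᵀ * X₂ * V))
        + (1 - θ) • ((H * (P + σ2⁻¹ • (Vᵀ * Y₁ * V))⁻¹ * H + Sig)⁻¹
          + σ2⁻¹ • (Vᵀ * Y₂ * V)))).PosSemidef := by
    have heq : ((H * (P + σ2⁻¹ • (Vᵀ * (θ • X₁ + (1 - θ) • Y₁) * V))⁻¹ * H + Sig)⁻¹
        + σ2⁻¹ • (Vᵀ * (θ • X₂ + (1 - θ) • Y₂) * V))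
      - (θ • ((H * (P + σ2⁻¹ • (Vᵀ * X₁ * V))⁻¹ * H + Sig)⁻¹ + σ2⁻¹ • (Vᵀ * X₂ * V))
        + (1 - θ) • ((H * (P + σ2⁻¹ • (Vᵀ * Y₁ * V))⁻¹ * H + Sig)⁻¹
          + σ2⁻¹ • (Vᵀ * Y₂ * V)))
      = (H * (θ • (P + σ2⁻¹ • (Vᵀ * X₁ * V)) + (1 - θ) • (P + σ2⁻¹ • (Vᵀ * Y₁ * V)))⁻¹ * H
            + Sig)⁻¹
        - (θ • (H * (P + σ2⁻¹ • (Vᵀ * X₁ * V))⁻¹ * H + Sig)⁻¹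
          + (1 - θ) • (H * (P + σ2⁻¹ • (Vᵀ * Y₁ * V))⁻¹ * H + Sig)⁻¹) := by
      rw [hAlin, hClin]
      module
    rw [heq]
    exact hG
  have ht2 := trace_ineq pdMX pdMY pdMθ h0 h1 hge
  have ht2' := mul_le_mul_of_nonneg_left ht2 hγ.le
  nlinarith [ht1, ht2']
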